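/- Let G be a connected simple graph on n vertices with Wiener index W and diameter d satisfying 2 ≤ d ≤ n−2. Let u_0, u_1, …, u_d be vertices forming a diameter path, i.e. d_G(u_i,u_j) = |i−j| for all 0 ≤ i,j ≤ d. Set s = Σ_{i=0}^d Tr_G(u_i), a = 12(1+d)(s − W) − nd(d+1)(d+2) − 3ns, and b = 4d(d+1)(d+2)W + 12s(W−s). Then S_𝒬(G) ≥ √(a² − 12b(d+1)(n−1−d)) / (3(d+1)(n−1−d)). -/

import Mathlib

open Finset Matrix

noncomputable def distMatrix {V : Type*} [Fintype V] (G : SimpleGraph V) : Matrix V V ℝ :=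
  Matrix.of fun u v => (G.dist u v : ℝ)

theorem distMatrix_isHermitian {V : Type*} [Fintype V] (G : SimpleGraph V) :
    (distMatrix G).IsHermitian := by
  show (distMatrix G)ᴴ = distMatrix G
  ext i j
  simp [distMatrix, Matrix.conjTranspose_apply, SimpleGraph.dist_comm]

noncomputable def transmission {V : Type*} [Fintype V] (G : SimpleGraph V) (v : V) : ℝ :=
  ∑ u, (G.dist v u : ℝ)

noncomputable def distSLMatrix {V : Type*} [Fintype V] [DecidableEq V] (G : SimpleGraph V) :
    Matrix V V ℝ :=
  Matrix.diagonal (transmission G) + distMatrix G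

theorem distSLMatrix_isHermitian {V : Type*} [Fintype V] [DecidableEq V] (G : SimpleGraph V) :
    (distSLMatrix G).IsHermitian :=
  (Matrix.isHermitian_diagonal _).add (distMatrix_isHermitian G)

noncomputable def maxEig {V : Type*} [Fintype V] [DecidableEq V] {A : Matrix V V ℝ}
    (hA : A.IsHermitian) : ℝ :=
  ⨆ i, hA.eigenvalues i

noncomputable def minEig {V : Type*} [Fintype V] [DecidableEq V] {A : Matrix V V ℝ}
    (hA : A.IsHermitian) : ℝ :=
  ⨅ i, hA.eigenvalues i

noncomputable def distSpread {V : Type*} [Fintype V] [DecidableEq V] (G : SimpleGraph V) : ℝ :=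
  maxEig (distMatrix_isHermitian G) - minEig (distMatrix_isHermitian G)

noncomputable def distSLSpread {V : Type*} [Fintype V] [DecidableEq V] (G : SimpleGraph V) : ℝ :=
  maxEig (distSLMatrix_isHermitian G) - minEig (distSLMatrix_isHermitian G)

/-! ### Auxiliary spectral lemmas -/

lemma quadForm_repr {V : Type*} [Fintype V] [DecidableEq V] {A : Matrix V V ℝ}
    (hA : A.IsHermitian) (z : V → ℝ) :
    ∃ w : V → ℝ, z ⬝ᵥ (A *ᵥ z) = ∑ j, hA.eigenvalues j * (w j)^2 ∧
      z ⬝ᵥ z = ∑ j, (w j)^2 := by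
  set U : Matrix V V ℝ := (hA.eigenvectorUnitary : Matrix V V ℝ) with hUdef
  have hstar : star U = Uᵀ := by
    ext i j; simp [Matrix.star_apply]
  have hUU : U * star U = 1 := Matrix.mem_unitaryGroup_iff.mp hA.eigenvectorUnitary.2
  set w : V → ℝ := (star U) *ᵥ z with hw
  refine ⟨w, ?_, ?_⟩
  · conv_lhs => rw [hA.spectral_theorem, Unitary.conjStarAlgAut_apply]
    rw [← Matrix.mulVec_mulVec, ← Matrix.mulVec_mulVec]
    rw [Matrix.dotProduct_mulVec z U, ← Matrix.mulVec_transpose, ← hstar, ← hw]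
    simp [dotProduct, Matrix.mulVec_diagonal]
    exact Finset.sum_congr rfl fun j _ => by ring
  · have h1 : w ⬝ᵥ w = z ⬝ᵥ z := by
      rw [hw, Matrix.dotProduct_mulVec, ← Matrix.mulVec_transpose]
      have : (star U)ᵀ = U := by rw [hstar, Matrix.transpose_transpose]
      rw [this, Matrix.mulVec_mulVec, hUU, Matrix.one_mulVec, dotProduct_comm]
    rw [← h1]
    simp [dotProduct, pow_two]

lemma rayleigh_bounds {V : Type*} [Fintype V] [DecidableEq V] {A : Matrix V V ℝ}
    (hA : A.IsHermitian) (z : V → ℝ) :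
    minEig hA * (z ⬝ᵥ z) ≤ z ⬝ᵥ (A *ᵥ z) ∧ z ⬝ᵥ (A *ᵥ z) ≤ maxEig hA * (z ⬝ᵥ z) := by
  obtain ⟨w, h1, h2⟩ := quadForm_repr hA z
  rw [h1, h2, Finset.mul_sum, Finset.mul_sum]
  constructor
  · refine Finset.sum_le_sum fun j _ => ?_
    exact mul_le_mul_of_nonneg_right (ciInf_le (Set.Finite.bddBelow (Set.finite_range _)) j)
      (sq_nonneg _)
  · refine Finset.sum_le_sum fun j _ => ?_
    exact mul_le_mul_of_nonneg_right (le_ciSup (Set.Finite.bddAbove (Set.finite_range _)) j)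
      (sq_nonneg _)

lemma trace_eq_sum_eigenvalues' {V : Type*} [Fintype V] [DecidableEq V] {A : Matrix V V ℝ}
    (hA : A.IsHermitian) : A.trace = ∑ i, hA.eigenvalues i := by
  conv_lhs => rw [hA.spectral_theorem, Unitary.conjStarAlgAut_apply]
  rw [Matrix.trace_mul_cycle]
  rw [Matrix.mem_unitaryGroup_iff'.mp hA.eigenvectorUnitary.2, one_mul]
  simp [Matrix.trace_diagonal]

lemma compression_spread {V : Type*} [Fintype V] [DecidableEq V] {A : Matrix V V ℝ}
    (hA : A.IsHermitian) (e1 e2 : V → ℝ)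
    (h11 : e1 ⬝ᵥ e1 = 1) (h22 : e2 ⬝ᵥ e2 = 1) (h12 : e1 ⬝ᵥ e2 = 0)
    (p q r : ℝ) (hp : p = e1 ⬝ᵥ (A *ᵥ e1)) (hq : q = e2 ⬝ᵥ (A *ᵥ e2))
    (hr : r = e1 ⬝ᵥ (A *ᵥ e2)) :
    Real.sqrt ((p - q)^2 + 4*r^2) ≤ maxEig hA - minEig hA := by
  have hsymm : ∀ x y : V → ℝ, x ⬝ᵥ (A *ᵥ y) = y ⬝ᵥ (A *ᵥ x) := by
    intro x y
    rw [Matrix.dotProduct_mulVec, ← Matrix.mulVec_transpose]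
    have hAt : Aᵀ = A := by
      have := hA; rw [Matrix.IsHermitian] at this
      ext i j
      conv_rhs => rw [← this]
      simp [Matrix.conjTranspose_apply]
    rw [hAt, dotProduct_comm]
  set M : Matrix (Fin 2) (Fin 2) ℝ := !![p, r; r, q] with hM
  have hMh : M.IsHermitian := by
    rw [Matrix.IsHermitian]
    ext i j
    fin_cases i <;> fin_cases j <;> simp [hM, Matrix.conjTranspose_apply]
  have key : ∀ i : Fin 2, minEig hA ≤ hMh.eigenvalues i ∧ hMh.eigenvalues i ≤ maxEig hA := by
    intro i
    set v : EuclideanSpace ℝ (Fin 2) := hMh.eigenvectorBasis i with hv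
    have hvunit : (v 0)^2 + (v 1)^2 = 1 := by
      have hnorm : ‖v‖ = 1 := hMh.eigenvectorBasis.orthonormal.1 i
      have := congrArg (· ^ 2) hnorm
      rw [EuclideanSpace.norm_eq] at this
      simp only [one_pow] at this
      rw [Real.sq_sqrt (by positivity)] at this
      rw [← this]
      rw [Fin.sum_univ_two]
      simp [Real.norm_eq_abs, sq_abs]
    have hMv : M *ᵥ ⇑v = hMh.eigenvalues i • ⇑v := hMh.mulVec_eigenvectorBasis i
    set z : V → ℝ := v 0 • e1 + v 1 • e2 with hz
    have hzz : z ⬝ᵥ z = 1 := by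
      rw [hz]
      simp only [add_dotProduct, dotProduct_add, smul_dotProduct,
        dotProduct_smul]
      rw [h11, h22, h12, dotProduct_comm e2 e1, h12]
      simp only [smul_eq_mul]
      linear_combination hvunit
    have hzAz : z ⬝ᵥ (A *ᵥ z) = hMh.eigenvalues i := by
      have expand : z ⬝ᵥ (A *ᵥ z) =
          (v 0)^2 * p + 2 * (v 0 * v 1) * r + (v 1)^2 * q := by
        rw [hz]
        simp only [Matrix.mulVec_add, Matrix.mulVec_smul, add_dotProduct,
          dotProduct_add, smul_dotProduct, dotProduct_smul]
        rw [← hp, ← hq, ← hr]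
        have : e2 ⬝ᵥ (A *ᵥ e1) = r := by rw [hr, hsymm]
        rw [this]
        simp [smul_eq_mul]; ring
      have expand2 : (⇑v : Fin 2 → ℝ) ⬝ᵥ (M *ᵥ ⇑v) =
          (v 0)^2 * p + 2 * (v 0 * v 1) * r + (v 1)^2 * q := by
        simp [dotProduct, Matrix.mulVec, hM, Fin.sum_univ_two]
        ring
      rw [expand, ← expand2, hMv]
      simp [dotProduct_smul, smul_eq_mul, dotProduct, Fin.sum_univ_two]
      rw [show v 0 * (hMh.eigenvalues i * v 0) + v 1 * (hMh.eigenvalues i * v 1)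
          = hMh.eigenvalues i * ((v 0)^2 + (v 1)^2) by ring, hvunit, mul_one]
    obtain ⟨hlo, hhi⟩ := rayleigh_bounds hA z
    simp only [hzz, mul_one, hzAz] at hlo hhi
    exact ⟨hlo, hhi⟩
  have htr : hMh.eigenvalues 0 + hMh.eigenvalues 1 = p + q := by
    have := trace_eq_sum_eigenvalues' hMh
    rw [Fin.sum_univ_two] at this
    rw [← this]
    simp [Matrix.trace_fin_two, hM]
  have hdet : hMh.eigenvalues 0 * hMh.eigenvalues 1 = p * q - r * r := by
    have := hMh.det_eq_prod_eigenvalues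
    rw [Fin.prod_univ_two] at this
    simp only [RCLike.ofReal_real_eq_id, id] at this
    rw [← this]
    simp [Matrix.det_fin_two, hM]
  have hsq : (p - q)^2 + 4*r^2 = (hMh.eigenvalues 0 - hMh.eigenvalues 1)^2 := by
    have h1 : (hMh.eigenvalues 0 - hMh.eigenvalues 1)^2
        = (hMh.eigenvalues 0 + hMh.eigenvalues 1)^2
          - 4 * (hMh.eigenvalues 0 * hMh.eigenvalues 1) := by ring
    rw [h1, htr, hdet]; ring
  rw [hsq, Real.sqrt_sq_eq_abs]
  rw [abs_sub_le_iff]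
  obtain ⟨h0lo, h0hi⟩ := key 0
  obtain ⟨h1lo, h1hi⟩ := key 1
  constructor <;> linarith

/-! ### Auxiliary combinatorial lemmas -/

lemma gaussR (k : ℕ) : ∑ j ∈ Finset.range k, (j:ℝ) = k*(k-1)/2 := by
  induction k with
  | zero => simp
  | succ k ih => rw [Finset.sum_range_succ, ih]; push_cast; ring

lemma absSumR (k : ℕ) :
    ∑ i ∈ Finset.range k, ∑ j ∈ Finset.range k, |(i:ℝ) - j| = (k-1)*k*(k+1)/3 := by
  induction k with
  | zero => simp
  | succ k ih =>
    rw [Finset.sum_range_succ]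
    have hrow : ∀ m ∈ Finset.range k, |(m:ℝ) - k| = (k:ℝ) - m := by
      intro m hm
      rw [Finset.mem_range] at hm
      rw [abs_sub_comm, abs_of_nonneg]
      have : (m:ℝ) < k := by exact_mod_cast hm
      linarith
    have h1 : ∑ j ∈ Finset.range (k+1), |((k:ℕ):ℝ) - j| = (k:ℝ)*k - k*(k-1)/2 := by
      rw [Finset.sum_range_succ]
      simp only [sub_self, abs_zero, add_zero]
      rw [show (∑ j ∈ Finset.range k, |((k:ℕ):ℝ) - j|)
          = ∑ j ∈ Finset.range k, ((k:ℝ) - j) from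
        Finset.sum_congr rfl fun j hj => by rw [abs_sub_comm]; exact hrow j hj]
      rw [Finset.sum_sub_distrib, Finset.sum_const, gaussR]
      simp only [Finset.card_range, nsmul_eq_mul]
    have h2 : ∀ i ∈ Finset.range k, ∑ j ∈ Finset.range (k+1), |(i:ℝ) - j|
        = (∑ j ∈ Finset.range k, |(i:ℝ) - j|) + ((k:ℝ) - i) := by
      intro i hi
      rw [Finset.sum_range_succ, hrow i hi]
    rw [show (∑ i ∈ Finset.range k, ∑ j ∈ Finset.range (k+1), |(i:ℝ) - j|)
          = ∑ i ∈ Finset.range k, ((∑ j ∈ Finset.range k, |(i:ℝ) - j|) + ((k:ℝ) - i)) from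
        Finset.sum_congr rfl h2]
    rw [Finset.sum_add_distrib, ih, Finset.sum_sub_distrib, Finset.sum_const, gaussR, h1]
    simp only [Finset.card_range, nsmul_eq_mul]
    push_cast
    ring

lemma indicator_dot {V : Type*} [Fintype V] [DecidableEq V] (Q : Matrix V V ℝ)
    (c1 c2 : ℝ) (S1 S2 : Finset V) :
    (fun v => if v ∈ S1 then c1 else 0) ⬝ᵥ (Q *ᵥ fun v => if v ∈ S2 then c2 else 0)
      = c1 * c2 * ∑ v ∈ S1, ∑ w ∈ S2, Q v w := by
  simp only [dotProduct, Matrix.mulVec, dotProduct, ite_mul, zero_mul,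
    mul_ite, mul_zero, Finset.sum_ite_mem, Finset.univ_inter]
  rw [Finset.mul_sum]
  refine Finset.sum_congr rfl fun v _ => ?_
  rw [Finset.mul_sum, Finset.mul_sum]
  exact Finset.sum_congr rfl fun w _ => by ring

lemma indicator_dot_self {V : Type*} [Fintype V] [DecidableEq V]
    (c1 c2 : ℝ) (S1 S2 : Finset V) :
    (fun v => if v ∈ S1 then c1 else 0) ⬝ᵥ (fun v => if v ∈ S2 then c2 else 0)
      = c1 * c2 * (S1 ∩ S2).card := by
  simp only [dotProduct, mul_ite, mul_zero, ite_mul, zero_mul]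
  have h : ∀ v : V, (if v ∈ S2 then if v ∈ S1 then c1 * c2 else 0 else 0)
      = if v ∈ S1 ∩ S2 then c1 * c2 else 0 := by
    intro v; simp only [Finset.mem_inter]; split_ifs <;> tauto
  calc (∑ v : V, if v ∈ S2 then if v ∈ S1 then c1 * c2 else 0 else 0)
      = ∑ v : V, if v ∈ S1 ∩ S2 then c1 * c2 else 0 :=
        Finset.sum_congr rfl fun v _ => h v
    _ = ∑ _v ∈ S1 ∩ S2, c1 * c2 := by rw [Finset.sum_ite_mem, Finset.univ_inter]
    _ = c1 * c2 * (S1 ∩ S2).card := by rw [Finset.sum_const, nsmul_eq_mul]; ring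

theorem stmt16 {V : Type*} [Fintype V] [DecidableEq V] (G : SimpleGraph V)
    (hconn : G.Connected)
    (n : ℕ) (hn : n = Fintype.card V)
    (W : ℝ) (hW : W = (∑ u, transmission G u) / 2)
    (d : ℕ) (hd : G.diam = d) (hd2 : 2 ≤ d) (hdn : d + 2 ≤ n)
    (u : Fin (d + 1) → V)
    (hu : ∀ i j : Fin (d + 1), (G.dist (u i) (u j) : ℤ) = |((i : ℕ) : ℤ) - ((j : ℕ) : ℤ)|)
    (s a b : ℝ)
    (hs : s = ∑ i, transmission G (u i))
    (ha : a = 12*(1 + d)*(s - W) - n*d*(d + 1)*(d + 2) - 3*n*s)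
    (hb : b = 4*d*(d + 1)*(d + 2)*W + 12*s*(W - s)) :
    Real.sqrt (a^2 - 12*b*(d + 1)*(n - 1 - d)) / (3*(d + 1)*((n : ℝ) - 1 - d)) ≤
      distSLSpread G := by
  classical
  set Q : Matrix V V ℝ := distSLMatrix G with hQ
  have hQh : Q.IsHermitian := distSLMatrix_isHermitian G
  -- injectivity of the diameter path
  have hinj : Function.Injective u := by
    intro i j hij
    have h := hu i j
    rw [hij, SimpleGraph.dist_self] at h
    have h0 : |((i:ℕ):ℤ) - ((j:ℕ):ℤ)| = 0 := by exact_mod_cast h.symm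
    rw [abs_eq_zero, sub_eq_zero] at h0
    exact Fin.ext (by exact_mod_cast h0)
  set S : Finset V := Finset.image u Finset.univ with hS
  have hcardS : S.card = d + 1 := by
    rw [hS, Finset.card_image_of_injective _ hinj, Finset.card_univ, Fintype.card_fin]
  have hmemS : ∀ i, u i ∈ S := fun i => Finset.mem_image_of_mem u (Finset.mem_univ i)
  set k : ℝ := (d:ℝ) + 1 with hkdef
  set m : ℝ := (n:ℝ) - 1 - (d:ℝ) with hmdef
  have hk : (0:ℝ) < k := by positivity
  have hm : (0:ℝ) < m := by
    have : (d:ℝ) + 2 ≤ (n:ℝ) := by exact_mod_cast hdn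
    simp only [hmdef]; linarith
  have hcardT : ((Sᶜ : Finset V).card : ℝ) = m := by
    rw [Finset.card_compl, hcardS]
    have hle : d + 1 ≤ Fintype.card V := by omega
    rw [Nat.cast_sub hle]
    rw [← hn]
    push_cast
    simp only [hmdef]; ring
  -- transmission and row sums
  have hQentry : ∀ v w : V, Q v w = (if v = w then transmission G v else 0) + (G.dist v w : ℝ) := by
    intro v w
    simp [hQ, distSLMatrix, Matrix.add_apply, Matrix.diagonal_apply, distMatrix]
  have hTrSum : ∑ v, transmission G v = 2*W := by rw [hW]; ring
  have hrowsum : ∀ v : V, ∑ w, Q v w = 2 * transmission G v := by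
    intro v
    rw [Finset.sum_congr rfl fun w _ => hQentry v w, Finset.sum_add_distrib]
    rw [Finset.sum_ite_eq Finset.univ v (fun w => transmission G v)]
    simp [transmission]
    ring
  set c : ℝ := (d:ℝ)*((d:ℝ)+1)*((d:ℝ)+2)/3 with hcdef
  -- distances within the path set
  have hdistcast : ∀ i j : Fin (d+1), (G.dist (u i) (u j) : ℝ) = |((i:ℕ):ℝ) - ((j:ℕ):ℝ)| := by
    intro i j
    have := congrArg (fun z : ℤ => (z : ℝ)) (hu i j)
    push_cast at this
    exact_mod_cast this
  have hdistS : ∑ v ∈ S, ∑ w ∈ S, (G.dist v w : ℝ) = c := by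
    rw [hS]
    rw [Finset.sum_image (fun x _ y _ h => hinj h)]
    rw [Finset.sum_congr rfl fun i _ => Finset.sum_image (fun x _ y _ h => hinj h)]
    rw [Finset.sum_congr rfl fun i _ => Finset.sum_congr rfl fun j _ => hdistcast i j]
    rw [Fin.sum_univ_eq_sum_range (fun i => ∑ j : Fin (d+1), |((i:ℕ):ℝ) - ((j:ℕ):ℝ)|)]
    rw [Finset.sum_congr rfl fun i (_ : i ∈ Finset.range (d+1)) =>
      Fin.sum_univ_eq_sum_range (fun j => |((i:ℕ):ℝ) - ((j:ℕ):ℝ)|) (d+1)]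
    rw [absSumR (d+1)]
    push_cast
    simp only [hcdef]
    ring
  -- transmissions over the path set
  have hTrS : ∑ v ∈ S, transmission G v = s := by
    rw [hS, Finset.sum_image (fun x _ y _ h => hinj h), hs]
  -- block sums of Q
  have hA1 : ∑ v ∈ S, ∑ w ∈ S, Q v w = s + c := by
    rw [Finset.sum_congr rfl fun v _ => Finset.sum_congr rfl fun w _ => hQentry v w]
    rw [Finset.sum_congr rfl fun v _ => Finset.sum_add_distrib]
    rw [Finset.sum_add_distrib, hdistS]
    congr 1
    rw [Finset.sum_congr rfl fun v hv => Finset.sum_ite_eq S v (fun _ => transmission G v)]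
    rw [Finset.sum_congr rfl fun v (hv : v ∈ S) => if_pos hv]
    exact hTrS
  have hSrow : ∑ v ∈ S, ∑ w, Q v w = 2 * s := by
    rw [Finset.sum_congr rfl fun v _ => hrowsum v, ← Finset.mul_sum, hTrS]
  have hsplit : ∀ v : V, ∑ w, Q v w = (∑ w ∈ S, Q v w) + ∑ w ∈ Sᶜ, Q v w := by
    intro v
    rw [← Finset.sum_add_sum_compl S (fun w => Q v w)]
  have hA2 : ∑ v ∈ S, ∑ w ∈ Sᶜ, Q v w = s - c := by
    have := hSrow
    rw [Finset.sum_congr rfl fun v _ => hsplit v, Finset.sum_add_distrib, hA1] at this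
    linarith
  have htotal : ∑ v, ∑ w, Q v w = 4 * W := by
    rw [Finset.sum_congr rfl fun v _ => hrowsum v, ← Finset.mul_sum, hTrSum]
    ring
  have hQsymm : ∀ v w : V, Q v w = Q w v := by
    intro v w
    rw [hQentry, hQentry, SimpleGraph.dist_comm]
    congr 1
    by_cases hvw : v = w
    · subst hvw; simp
    · rw [if_neg hvw, if_neg (Ne.symm hvw)]
  have hA2' : ∑ v ∈ Sᶜ, ∑ w ∈ S, Q v w = s - c := by
    rw [← hA2, Finset.sum_comm (f := fun v w => Q v w)]
    exact Finset.sum_congr rfl fun v _ => Finset.sum_congr rfl fun w _ => hQsymm w v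
  have hA3 : ∑ v ∈ Sᶜ, ∑ w ∈ Sᶜ, Q v w = 4*W - 3*s + c := by
    have h4 : (∑ v ∈ S, ∑ w, Q v w) + ∑ v ∈ Sᶜ, ∑ w, Q v w = 4 * W := by
      rw [Finset.sum_add_sum_compl S (fun v => ∑ w, Q v w), htotal]
    rw [Finset.sum_congr rfl fun v _ => hsplit v, Finset.sum_add_distrib] at h4
    rw [show (∑ v ∈ Sᶜ, ∑ w, Q v w)
        = ∑ v ∈ Sᶜ, ((∑ w ∈ S, Q v w) + ∑ w ∈ Sᶜ, Q v w) from
      Finset.sum_congr rfl fun v _ => hsplit v] at h4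
    rw [Finset.sum_add_distrib, hA1, hA2, hA2'] at h4
    linarith
  -- the two indicator test vectors
  set e1 : V → ℝ := fun v => if v ∈ S then (Real.sqrt k)⁻¹ else 0 with he1
  set e2 : V → ℝ := fun v => if v ∈ Sᶜ then (Real.sqrt m)⁻¹ else 0 with he2
  have hsqk : (Real.sqrt k)⁻¹ * (Real.sqrt k)⁻¹ = k⁻¹ := by
    rw [← mul_inv, Real.mul_self_sqrt hk.le]
  have hsqm : (Real.sqrt m)⁻¹ * (Real.sqrt m)⁻¹ = m⁻¹ := by
    rw [← mul_inv, Real.mul_self_sqrt hm.le]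
  have h11 : e1 ⬝ᵥ e1 = 1 := by
    rw [he1, indicator_dot_self, Finset.inter_self, hcardS, hsqk]
    rw [show ((d+1 : ℕ) : ℝ) = k by push_cast; simp only [hkdef]]
    exact inv_mul_cancel₀ hk.ne'
  have h22 : e2 ⬝ᵥ e2 = 1 := by
    rw [he2, indicator_dot_self, Finset.inter_self, hcardT, hsqm]
    exact inv_mul_cancel₀ hm.ne'
  have h12 : e1 ⬝ᵥ e2 = 0 := by
    rw [he1, he2, indicator_dot_self, Finset.inter_compl]
    simp
  -- Rayleigh data
  set p : ℝ := k⁻¹ * (s + c) with hpdef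
  set q : ℝ := m⁻¹ * (4*W - 3*s + c) with hqdef
  set r : ℝ := (Real.sqrt k)⁻¹ * (Real.sqrt m)⁻¹ * (s - c) with hrdef
  have hp : p = e1 ⬝ᵥ (Q *ᵥ e1) := by
    rw [he1, indicator_dot, hA1, hsqk, hpdef]
  have hq : q = e2 ⬝ᵥ (Q *ᵥ e2) := by
    rw [he2, indicator_dot, hA3, hsqm, hqdef]
  have hr : r = e1 ⬝ᵥ (Q *ᵥ e2) := by
    rw [he1, he2, indicator_dot, hA2, hrdef]
  have hmain : Real.sqrt ((p - q)^2 + 4*r^2) ≤ distSLSpread G :=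
    compression_spread hQh e1 e2 h11 h22 h12 p q r hp hq hr
  refine le_trans (le_of_eq ?_) hmain
  -- algebraic identity
  have hr2 : r^2 = k⁻¹ * m⁻¹ * (s - c)^2 := by
    rw [hrdef]
    rw [mul_pow, mul_pow, ← Real.sqrt_inv, ← Real.sqrt_inv,
      Real.sq_sqrt (by positivity), Real.sq_sqrt (by positivity)]
  have hX : (0:ℝ) ≤ (p - q)^2 + 4*r^2 := by positivity
  have hiden : a^2 - 12*b*((d:ℝ) + 1)*((n:ℝ) - 1 - (d:ℝ))
      = (3*k*m)^2 * ((p - q)^2 + 4*r^2) := by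
    rw [hr2, hpdef, hqdef, ha, hb]
    simp only [hkdef, hmdef, hcdef]
    have hk0 : (d:ℝ) + 1 ≠ 0 := by positivity
    have hm0 : (n:ℝ) - 1 - d ≠ 0 := hm.ne'
    field_simp
    ring
  rw [hiden]
  rw [show ((3:ℝ)*k*m)^2 * ((p - q)^2 + 4*r^2)
      = ((3:ℝ)*k*m)^2 * ((p - q)^2 + 4*r^2) from rfl]
  rw [Real.sqrt_mul (by positivity) _, Real.sqrt_sq (by positivity)]
  rw [show (3:ℝ)*((d:ℝ)+1)*((n:ℝ) - 1 - (d:ℝ)) = 3*k*m by simp only [hkdef, hmdef]]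
  field_simp
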